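/- For nonnegative reals V₁, …, V_K not all equal to +∞ and not all zero of the exponentials, define g(δ) = (∑ᵢ exp(-δVᵢ))² / ∑ᵢ exp(-2δVᵢ) for δ ≥ 0. Then g(0) = K, g is continuous, and if the Vᵢ are not all equal then g is strictly decreasing (toward the number of indices achieving min Vᵢ as δ → ∞); hence for any target E with (number of minimizers of V) < E < K there exists a unique δ > 0 with g(δ) = E. -/

import Mathlib

open Filter
open scoped Classical

private lemma st12_sum_exp_pos {K : ℕ} (hK : 0 < K) (f : Fin K → ℝ) :
    0 < ∑ i, Real.exp (f i) := by
  haveI : Nonempty (Fin K) := Fin.pos_iff_nonempty.mp hK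
  exact Finset.sum_pos (fun i _ => Real.exp_pos _) Finset.univ_nonempty

private lemma st12_hasDerivAt {K : ℕ} (V : Fin K → ℝ) (c δ : ℝ) :
    HasDerivAt (fun x => ∑ i, Real.exp (c * x * V i))
      (∑ i, (c * V i) * Real.exp (c * δ * V i)) δ := by
  apply HasDerivAt.fun_sum
  intro i _
  have h1 : HasDerivAt (fun x : ℝ => c * x * V i) (c * V i) δ := by
    simpa using ((hasDerivAt_id δ).const_mul c).mul_const (V i)
  simpa [mul_comm] using h1.exp

private lemma st12_identity {K : ℕ} (V a : Fin K → ℝ) :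
    2*(∑ i, (-V i)*a i)*(∑ i, a i^2) - (∑ i, a i)*(∑ i, (-2*V i)*a i^2)
      = ∑ i, ∑ j, (V j - V i) * (a i * a j) * (a j - a i) := by
  have swap : ∑ i, ∑ j, (V i - V j) * a j * a i ^ 2
      = ∑ j, ∑ i, (V i - V j) * a j * a i ^ 2 := Finset.sum_comm
  calc 2*(∑ i, (-V i)*a i)*(∑ i, a i^2) - (∑ i, a i)*(∑ i, (-2*V i)*a i^2)
      = (∑ i, ∑ j, (V j - V i) * a i * a j ^ 2)
        + ∑ i, ∑ j, (V i - V j) * a j * a i ^ 2 := by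
        rw [mul_assoc, Finset.sum_mul_sum, Finset.sum_mul_sum, swap,
          Finset.mul_sum, ← Finset.sum_add_distrib, ← Finset.sum_sub_distrib]
        refine Finset.sum_congr rfl fun i _ => ?_
        rw [Finset.mul_sum, ← Finset.sum_add_distrib, ← Finset.sum_sub_distrib]
        exact Finset.sum_congr rfl fun j _ => by ring
    _ = ∑ i, ∑ j, (V j - V i) * (a i * a j) * (a j - a i) := by
        rw [← Finset.sum_add_distrib]
        refine Finset.sum_congr rfl fun i _ => ?_
        rw [← Finset.sum_add_distrib]
        exact Finset.sum_congr rfl fun j _ => by ring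

private lemma st12_neg {K : ℕ} (V : Fin K → ℝ) (hne : ¬ ∀ i j, V i = V j)
    {δ : ℝ} (hδ : 0 < δ) :
    ∑ i, ∑ j, (V j - V i)
      * ((fun i => Real.exp (-δ * V i)) i * (fun i => Real.exp (-δ * V i)) j)
      * ((fun i => Real.exp (-δ * V i)) j - (fun i => Real.exp (-δ * V i)) i) < 0 := by
  set a : Fin K → ℝ := fun i => Real.exp (-δ * V i) with ha
  have hmono : ∀ i j, V i < V j → a j < a i := fun i j h =>
    Real.exp_lt_exp.mpr (by nlinarith)
  have hterm : ∀ i j, (V j - V i) * (a i * a j) * (a j - a i) ≤ 0 := by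
    intro i j
    rcases lt_trichotomy (V i) (V j) with h | h | h
    · exact (mul_neg_of_pos_of_neg (mul_pos (sub_pos.mpr h)
        (mul_pos (Real.exp_pos _) (Real.exp_pos _))) (sub_neg.mpr (hmono i j h))).le
    · simp [h]
    · exact (mul_neg_of_neg_of_pos (mul_neg_of_neg_of_pos (sub_neg.mpr h)
        (mul_pos (Real.exp_pos _) (Real.exp_pos _))) (sub_pos.mpr (hmono j i h))).le
  have hterm_lt : ∀ i j, V i ≠ V j → (V j - V i) * (a i * a j) * (a j - a i) < 0 := by
    intro i j h
    rcases h.lt_or_gt with h | h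
    · exact mul_neg_of_pos_of_neg (mul_pos (sub_pos.mpr h)
        (mul_pos (Real.exp_pos _) (Real.exp_pos _))) (sub_neg.mpr (hmono i j h))
    · exact mul_neg_of_neg_of_pos (mul_neg_of_neg_of_pos (sub_neg.mpr h)
        (mul_pos (Real.exp_pos _) (Real.exp_pos _))) (sub_pos.mpr (hmono j i h))
  push_neg at hne
  obtain ⟨i₀, j₀, hij⟩ := hne
  have inner_lt : ∑ j, (V j - V i₀) * (a i₀ * a j) * (a j - a i₀) < 0 := by
    have := Finset.sum_lt_sum (f := fun j => (V j - V i₀) * (a i₀ * a j) * (a j - a i₀))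
      (g := fun _ => (0:ℝ)) (fun j _ => hterm i₀ j)
      ⟨j₀, Finset.mem_univ _, hterm_lt i₀ j₀ hij⟩
    simpa using this
  have := Finset.sum_lt_sum
    (f := fun i => ∑ j, (V j - V i) * (a i * a j) * (a j - a i))
    (g := fun _ => (0:ℝ))
    (fun i _ => Finset.sum_nonpos fun j _ => hterm i j)
    ⟨i₀, Finset.mem_univ _, inner_lt⟩
  simpa using this

private lemma st12_tendsto (K : ℕ) (hK : 0 < K) (V : Fin K → ℝ) :
    Tendsto (fun δ : ℝ => (∑ i, Real.exp (-δ * V i)) ^ 2 / ∑ i, Real.exp (-2 * δ * V i))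
      atTop (nhds ((Finset.univ.filter fun i => ∀ j, V i ≤ V j).card : ℝ)) := by
  haveI : Nonempty (Fin K) := Fin.pos_iff_nonempty.mp hK
  obtain ⟨i₀, -, hi₀⟩ := Finset.exists_min_image Finset.univ V Finset.univ_nonempty
  set m := V i₀ with hm
  have hfilt : (Finset.univ.filter fun i => ∀ j, V i ≤ V j)
      = Finset.univ.filter fun i => V i = m := by
    refine Finset.filter_congr fun i _ => ?_
    constructor
    · intro h; exact le_antisymm (h i₀) (hi₀ i (Finset.mem_univ i))
    · intro h j; rw [h]; exact hi₀ j (Finset.mem_univ j)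
  set c : ℝ → Fin K → ℝ := fun δ i => Real.exp (-δ * (V i - m)) with hc
  have hg_eq : ∀ δ : ℝ, (∑ i, Real.exp (-δ * V i)) ^ 2 / ∑ i, Real.exp (-2 * δ * V i)
      = (∑ i, c δ i) ^ 2 / ∑ i, (c δ i) ^ 2 := by
    intro δ
    have h1 : ∑ i, Real.exp (-δ * V i) = Real.exp (-δ * m) * ∑ i, c δ i := by
      rw [Finset.mul_sum]
      refine Finset.sum_congr rfl fun i _ => ?_
      rw [hc, ← Real.exp_add]; ring_nf
    have h2 : ∑ i, Real.exp (-2 * δ * V i) = Real.exp (-δ * m) ^ 2 * ∑ i, (c δ i) ^ 2 := by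
      rw [Finset.mul_sum]
      refine Finset.sum_congr rfl fun i _ => ?_
      rw [hc, sq, sq, ← Real.exp_add, ← Real.exp_add, ← Real.exp_add]; ring_nf
    rw [h1, h2, mul_pow, mul_div_mul_left _ _ (pow_ne_zero 2 (Real.exp_ne_zero _))]
  have hlim : ∀ i, Tendsto (fun δ : ℝ => c δ i) atTop
      (nhds (if V i = m then (1:ℝ) else 0)) := by
    intro i
    by_cases h : V i = m
    · simp [hc, h]
    · rw [if_neg h]
      have hpos : 0 < V i - m := sub_pos.mpr ((hi₀ i (Finset.mem_univ i)).lt_of_ne (Ne.symm h))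
      have h1 : Tendsto (fun δ : ℝ => -δ * (V i - m)) atTop atBot := by
        have h2 := tendsto_neg_atTop_atBot.comp ((tendsto_id (α := ℝ)).atTop_mul_const hpos)
        simpa [Function.comp_def, neg_mul] using h2
      exact Real.tendsto_exp_atBot.comp h1
  set N : ℝ := ((Finset.univ.filter fun i => V i = m).card : ℝ) with hN
  have hNsum : ∑ i, (if V i = m then (1:ℝ) else 0) = N := by
    rw [hN]; simp [Finset.sum_boole]
  have hNpos : 0 < N := by
    rw [hN]
    have : i₀ ∈ Finset.univ.filter fun i => V i = m := by simp [hm]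
    exact_mod_cast Finset.card_pos.mpr ⟨i₀, this⟩
  have hs1 : Tendsto (fun δ : ℝ => ∑ i, c δ i) atTop (nhds N) := by
    rw [← hNsum]; exact tendsto_finset_sum _ fun i _ => hlim i
  have hs2 : Tendsto (fun δ : ℝ => ∑ i, (c δ i) ^ 2) atTop (nhds N) := by
    have : ∑ i, ((if V i = m then (1:ℝ) else 0)) ^ 2 = N := by
      rw [← hNsum]
      exact Finset.sum_congr rfl fun i _ => by by_cases h : V i = m <;> simp [h]
    rw [← this]
    exact tendsto_finset_sum _ fun i _ => (hlim i).pow 2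
  have hten : Tendsto (fun δ : ℝ => (∑ i, c δ i) ^ 2 / ∑ i, (c δ i) ^ 2) atTop
      (nhds (N ^ 2 / N)) := (hs1.pow 2).div hs2 hNpos.ne'
  have hN2 : N ^ 2 / N = N := by rw [sq, mul_div_assoc, div_self hNpos.ne', mul_one]
  rw [hfilt, ← hN, ← hN2]
  exact hten.congr fun δ => (hg_eq δ).symm

/-- Adaptive tempering: for nonnegative `V₁, …, V_K`, the ESS function
`g(δ) = (∑ exp(-δVᵢ))² / ∑ exp(-2δVᵢ)` satisfies `g(0) = K`, is continuous, and — if the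
`Vᵢ` are not all equal — is strictly decreasing on `[0, ∞)` with limit the number of
minimizers of `V` as `δ → ∞`; hence for any target `E` strictly between the number of
minimizers and `K` there exists a unique `δ > 0` with `g(δ) = E`. -/
theorem stmt12 (K : ℕ) (hK : 0 < K) (V : Fin K → ℝ) (hV_nonneg : ∀ i, 0 ≤ V i) :
    let g : ℝ → ℝ := fun δ =>
      (∑ i, Real.exp (-δ * V i)) ^ 2 / ∑ i, Real.exp (-2 * δ * V i);
    let Nmin : ℝ := ((Finset.univ.filter fun i => ∀ j, V i ≤ V j).card : ℝ);
    g 0 = K ∧ Continuous g ∧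
      ((¬ ∀ i j, V i = V j) →
        StrictAntiOn g (Set.Ici 0) ∧
        Tendsto g atTop (nhds Nmin) ∧
        ∀ E : ℝ, Nmin < E → E < K → ∃! δ : ℝ, 0 < δ ∧ g δ = E) := by
  intro g Nmin
  have hg0 : g 0 = K := by
    show (∑ i : Fin K, Real.exp (-(0:ℝ) * V i)) ^ 2 / ∑ i : Fin K, Real.exp (-2 * 0 * V i) = K
    simp only [neg_zero, zero_mul, mul_zero, Real.exp_zero, Finset.sum_const,
      Finset.card_univ, Fintype.card_fin, nsmul_eq_mul, mul_one]
    rw [sq, mul_div_assoc, div_self (by exact_mod_cast hK.ne'), mul_one]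
  have hKne : (0:ℝ) < K := by exact_mod_cast hK
  have hden_pos : ∀ δ : ℝ, 0 < ∑ i, Real.exp (-2 * δ * V i) :=
    fun δ => st12_sum_exp_pos hK _
  have hnum_pos : ∀ δ : ℝ, 0 < ∑ i, Real.exp (-δ * V i) :=
    fun δ => st12_sum_exp_pos hK _
  have hc1 : Continuous fun δ : ℝ => ∑ i, Real.exp (-δ * V i) := by
    apply continuous_finset_sum; intro i _; fun_prop
  have hc2 : Continuous fun δ : ℝ => ∑ i, Real.exp (-2 * δ * V i) := by
    apply continuous_finset_sum; intro i _; fun_prop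
  have hgcont : Continuous g := (hc1.pow 2).div hc2 fun δ => (hden_pos δ).ne'
  refine ⟨hg0, hgcont, fun hne => ?_⟩
  -- derivatives
  have hS1 : ∀ δ : ℝ, HasDerivAt (fun x => ∑ i, Real.exp (-x * V i))
      (∑ i, (-V i) * Real.exp (-δ * V i)) δ := by
    intro δ
    have := st12_hasDerivAt V (-1) δ
    simpa [neg_one_mul] using this
  have hS2 : ∀ δ : ℝ, HasDerivAt (fun x => ∑ i, Real.exp (-2 * x * V i))
      (∑ i, (-2 * V i) * Real.exp (-2 * δ * V i)) δ := fun δ => st12_hasDerivAt V (-2) δ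
  have hgderiv : ∀ δ : ℝ, 0 < δ → deriv g δ < 0 := by
    intro δ hδ
    have hg : HasDerivAt g
        (((2 * (∑ i, Real.exp (-δ * V i)) ^ 1 * (∑ i, (-V i) * Real.exp (-δ * V i)))
            * (∑ i, Real.exp (-2 * δ * V i))
          - (∑ i, Real.exp (-δ * V i)) ^ 2 * (∑ i, (-2 * V i) * Real.exp (-2 * δ * V i)))
          / ((∑ i, Real.exp (-2 * δ * V i)) ^ 2)) δ :=
      ((hS1 δ).pow 2).div (hS2 δ) (hden_pos δ).ne'
    rw [hg.deriv]
    apply div_neg_of_neg_of_pos _ (pow_pos (hden_pos δ) 2)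
    have ha2 : ∀ i, Real.exp (-2 * δ * V i) = Real.exp (-δ * V i) ^ 2 := by
      intro i; rw [sq, ← Real.exp_add]; ring_nf
    have key := st12_neg V hne hδ
    have hid := st12_identity V (fun i => Real.exp (-δ * V i))
    calc 2 * (∑ i, Real.exp (-δ * V i)) ^ 1 * (∑ i, (-V i) * Real.exp (-δ * V i))
            * (∑ i, Real.exp (-2 * δ * V i))
          - (∑ i, Real.exp (-δ * V i)) ^ 2 * (∑ i, (-2 * V i) * Real.exp (-2 * δ * V i))
        = (∑ i, Real.exp (-δ * V i)) *
            (2*(∑ i, (-V i) * Real.exp (-δ * V i))*(∑ i, Real.exp (-δ * V i)^2)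
              - (∑ i, Real.exp (-δ * V i))*(∑ i, (-2 * V i) * Real.exp (-δ * V i)^2)) := by
          simp only [← ha2]; ring
      _ = (∑ i, Real.exp (-δ * V i)) *
            ∑ i, ∑ j, (V j - V i) * (Real.exp (-δ * V i) * Real.exp (-δ * V j))
              * (Real.exp (-δ * V j) - Real.exp (-δ * V i)) := by rw [hid]
      _ < 0 := mul_neg_of_pos_of_neg (hnum_pos δ) key
  have hanti : StrictAntiOn g (Set.Ici 0) := by
    apply strictAntiOn_of_deriv_neg (convex_Ici 0) hgcont.continuousOn
    intro x hx
    rw [interior_Ici] at hx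
    exact hgderiv x hx
  have hten : Tendsto g atTop (nhds Nmin) := st12_tendsto K hK V
  refine ⟨hanti, hten, fun E hE1 hE2 => ?_⟩
  have hev : ∀ᶠ δ in atTop, g δ < E := hten.eventually_lt_const hE1
  obtain ⟨δ₁, hδ₁E, hδ₁1⟩ := (hev.and (eventually_ge_atTop (1:ℝ))).exists
  have hδ₁pos : (0:ℝ) < δ₁ := lt_of_lt_of_le one_pos hδ₁1
  have hmem : E ∈ Set.Icc (g δ₁) (g 0) := ⟨hδ₁E.le, by rw [hg0]; exact hE2.le⟩
  obtain ⟨δ, hδmem, hgδ⟩ := intermediate_value_Icc' hδ₁pos.le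
    (hgcont.continuousOn (s := Set.Icc 0 δ₁)) hmem
  have hδpos : 0 < δ := by
    rcases hδmem.1.lt_or_eq with h | h
    · exact h
    · exfalso; rw [← h, hg0] at hgδ; exact absurd hgδ hE2.ne'
  refine ⟨δ, ⟨hδpos, hgδ⟩, fun y hy => ?_⟩
  exact hanti.injOn (le_of_lt hy.1) (le_of_lt hδpos) (hy.2.trans hgδ.symm)
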